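/- arXiv:0811.1818 — 4 statements merged into one kernel-verified Lean document; each statement's English description precedes it below -/
import Mathlib

section
/- Let A be an invertible symmetric n×n complex matrix, and let w⁽¹⁾, w⁽²⁾ ∈ ℂⁿ be linearly independent contact points, i.e., A w⁽ʲ⁾ = (1/conj(μⱼ)) conj(w⁽ʲ⁾) for nonzero complex numbers μ₁, μ₂. If |μ₁| ≠ |μ₂|, then for all nonzero complex numbers T₁, T₂, the point w = T₁ w⁽¹⁾ + T₂ w⁽²⁾ is not a contact point: there is no nonzero μ ∈ ℂ with A w = (1/conj μ) conj(w). -/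
/-- If `w⁽¹⁾, w⁽²⁾` are linearly independent contact points with
`|μ₁| ≠ |μ₂|`, then no nontrivial combination `T₁ w⁽¹⁾ + T₂ w⁽²⁾` is a contact
point. -/
theorem stmt4 {n : ℕ} (A : Matrix (Fin n) (Fin n) ℂ)
    (hA : A.IsSymm) (hdet : A.det ≠ 0)
    (w₁ w₂ : Fin n → ℂ) (μ₁ μ₂ : ℂ) (hμ₁ : μ₁ ≠ 0) (hμ₂ : μ₂ ≠ 0)
    (h1 : A.mulVec w₁ = (1 / starRingEnd ℂ μ₁) • star w₁)
    (h2 : A.mulVec w₂ = (1 / starRingEnd ℂ μ₂) • star w₂)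
    (hind : LinearIndependent ℂ ![w₁, w₂])
    (habs : ‖μ₁‖ ≠ ‖μ₂‖) :
    ∀ T₁ T₂ : ℂ, T₁ ≠ 0 → T₂ ≠ 0 →
      ¬ ∃ μ : ℂ, μ ≠ 0 ∧
        A.mulVec (T₁ • w₁ + T₂ • w₂)
          = (1 / starRingEnd ℂ μ) • star (T₁ • w₁ + T₂ • w₂) := by
  rintro T₁ T₂ hT₁ hT₂ ⟨μ, hμ, heq⟩
  set c := starRingEnd ℂ
  have hlhs : A.mulVec (T₁ • w₁ + T₂ • w₂)
      = (T₁ / c μ₁) • star w₁ + (T₂ / c μ₂) • star w₂ := by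
    rw [Matrix.mulVec_add, Matrix.mulVec_smul, Matrix.mulVec_smul, h1, h2,
      smul_smul, smul_smul]
    ring_nf
  have hrhs : (1 / c μ) • star (T₁ • w₁ + T₂ • w₂)
      = (c T₁ / c μ) • star w₁ + (c T₂ / c μ) • star w₂ := by
    rw [star_add, star_smul, star_smul, smul_add, smul_smul, smul_smul]
    simp only [RCLike.star_def]
    ring_nf
    rfl
  have hcomb : (T₁ / c μ₁ - c T₁ / c μ) • star w₁
      + (T₂ / c μ₂ - c T₂ / c μ) • star w₂ = 0 := by
    have := heq
    rw [hlhs, hrhs] at this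
    have h0 := sub_eq_zero.mpr this
    rw [sub_smul, sub_smul, ← h0]; abel
  have hcomb' : (c (T₁ / c μ₁ - c T₁ / c μ)) • w₁
      + (c (T₂ / c μ₂ - c T₂ / c μ)) • w₂ = 0 := by
    have := congrArg star hcomb
    simpa [star_add, star_smul, RCLike.star_def] using this
  have hpair := (LinearIndependent.pair_iff.mp hind) _ _ hcomb'
  have e1 : T₁ / c μ₁ - c T₁ / c μ = 0 := by
    have := hpair.1
    rwa [map_eq_zero] at this
  have e2 : T₂ / c μ₂ - c T₂ / c μ = 0 := by
    have := hpair.2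
    rwa [map_eq_zero] at this
  have hcμ₁ : c μ₁ ≠ 0 := by simpa [c] using hμ₁
  have hcμ₂ : c μ₂ ≠ 0 := by simpa [c] using hμ₂
  have hcμ : c μ ≠ 0 := by simpa [c] using hμ
  have f1 : T₁ * c μ = c T₁ * c μ₁ := by
    field_simp at e1; linear_combination e1
  have f2 : T₂ * c μ = c T₂ * c μ₂ := by
    field_simp at e2; linear_combination e2
  have a1 : ‖μ‖ = ‖μ₁‖ := by
    have := congrArg (‖·‖) f1
    simp only [norm_mul, Complex.norm_conj, c] at this
    have hT₁' : ‖T₁‖ ≠ 0 := by simpa using hT₁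
    exact mul_left_cancel₀ hT₁' this
  have a2 : ‖μ‖ = ‖μ₂‖ := by
    have := congrArg (‖·‖) f2
    simp only [norm_mul, Complex.norm_conj, c] at this
    have hT₂' : ‖T₂‖ ≠ 0 := by simpa using hT₂
    exact mul_left_cancel₀ hT₂' this
  exact habs (a1 ▸ a2)
end

section
/- The set of invertible symmetric n×n complex matrices A such that A⁻¹ · conj(A⁻¹) has n pairwise distinct eigenvalues is dense in the space of all symmetric n×n complex matrices. -/
open Matrix Module LinearMap Set Polynomial

section Aux

variable {R S : Type*} [CommRing R] [CommRing S] {n : ℕ}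

noncomputable def hankS (M : Matrix (Fin n) (Fin n) R) : Matrix (Fin n) (Fin n) R :=
  Matrix.of fun i j => (M ^ ((i : ℕ) + (j : ℕ))).trace

noncomputable def gdisc (M : Matrix (Fin n) (Fin n) R) : R := (hankS M).det

lemma gdisc_of_traces {M : Matrix (Fin n) (Fin n) R} {e : Fin n → R}
    (h : ∀ k : ℕ, (M ^ k).trace = ∑ i, e i ^ k) :
    gdisc M = (∏ i : Fin n, ∏ j ∈ Finset.Ioi i, (e j - e i)) ^ 2 := by
  have hH : hankS M = (vandermonde e)ᵀ * vandermonde e := by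
    ext i j
    simp only [hankS, Matrix.of_apply, Matrix.mul_apply, Matrix.transpose_apply,
      Matrix.vandermonde_apply]
    rw [h]
    congr 1
    ext l
    rw [pow_add]
  rw [gdisc, hH, Matrix.det_mul, Matrix.det_transpose, Matrix.det_vandermonde, sq]

lemma gdisc_map (φ : R →+* S) (M : Matrix (Fin n) (Fin n) R) :
    gdisc (M.map φ) = φ (gdisc M) := by
  have hH : hankS (M.map φ) = (hankS M).map φ := by
    ext i j
    simp only [hankS, Matrix.of_apply, Matrix.map_apply]
    have : (M.map φ) ^ ((i : ℕ) + j) = (M ^ ((i : ℕ) + j)).map φ := by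
      have := map_pow (φ.mapMatrix) M ((i : ℕ) + j)
      simpa [RingHom.mapMatrix_apply] using this.symm
    rw [this]
    simp [Matrix.trace, Matrix.diag, map_sum, Matrix.map_apply]
  rw [gdisc, hH, gdisc]
  exact (RingHom.map_det φ (hankS M)).symm ▸ rfl

lemma gdisc_smul (c : R) (M : Matrix (Fin n) (Fin n) R) :
    gdisc (c • M) = (∏ i : Fin n, c ^ (i : ℕ)) ^ 2 * gdisc M := by
  have hH : hankS (c • M) =
      (Matrix.diagonal fun i : Fin n => c ^ (i : ℕ)) * hankS M *
        (Matrix.diagonal fun i : Fin n => c ^ (i : ℕ)) := by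
    ext i j
    rw [Matrix.mul_diagonal, Matrix.diagonal_mul]
    simp only [hankS, Matrix.of_apply]
    rw [_root_.smul_pow, Matrix.trace_smul, smul_eq_mul, pow_add]
    ring
  rw [gdisc, hH, Matrix.det_mul, Matrix.det_mul, Matrix.det_diagonal, gdisc, sq]
  ring

lemma trace_pow_eq {n : ℕ} (M : Matrix (Fin n) (Fin n) ℂ) (k : ℕ) :
    (M ^ k).trace = LinearMap.trace ℂ (Fin n → ℂ) (M.mulVecLin ^ k) := by
  have h : M.mulVecLin ^ k = (M ^ k).mulVecLin := by
    induction k with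
    | zero => rw [pow_zero, pow_zero, Matrix.mulVecLin_one]; rfl
    | succ k ih => rw [pow_succ, pow_succ, ih, Matrix.mulVecLin_mul]; rfl
  rw [h, LinearMap.trace_eq_matrix_trace ℂ (Pi.basisFun ℂ (Fin n)),
    LinearMap.toMatrix_eq_toMatrix', ← Matrix.toLin'_apply', LinearMap.toMatrix'_toLin']

lemma trace_restrict_pow {V : Type*} [AddCommGroup V] [Module ℂ V] [FiniteDimensional ℂ V]
    (f : Module.End ℂ V) (μ : ℂ) (k : ℕ)
    (h : MapsTo (f ^ k) (f.maxGenEigenspace μ) (f.maxGenEigenspace μ)) :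
    LinearMap.trace ℂ _ ((f ^ k).restrict h) =
      (finrank ℂ (f.maxGenEigenspace μ) : ℂ) * μ ^ k := by
  classical
  have hmap : MapsTo f (f.maxGenEigenspace μ) (f.maxGenEigenspace μ) :=
    f.mapsTo_maxGenEigenspace_of_comm rfl μ
  have hres : (f ^ k).restrict h = (f.restrict hmap) ^ k := by
    rw [Module.End.pow_restrict k hmap]
  set g := f.restrict hmap with hg
  set a : Module.End ℂ (f.maxGenEigenspace μ) := algebraMap ℂ _ μ with ha
  have hnil : IsNilpotent (g - a) := by
    have := f.isNilpotent_restrict_maxGenEigenspace_sub_algebraMap μ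
    convert this using 2
    ext x
    rfl
  set b := g - a with hb
  have hgab : g = a + b := by rw [hb]; abel
  have hcomm : Commute a b :=
    Commute.sub_right (Algebra.commutes μ g) (Commute.refl a)
  have hbpow : ∀ j : ℕ, 1 ≤ j → LinearMap.trace ℂ _ (b ^ j) = 0 := by
    intro j hj
    have h1 : IsNilpotent (b ^ j) := hnil.pow_of_pos (by omega)
    have h2 : IsNilpotent (LinearMap.trace ℂ _ (b ^ j)) :=
      LinearMap.isNilpotent_trace_of_isNilpotent h1
    exact h2.eq_zero
  rw [hres, hgab, hcomm.add_pow, map_sum]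
  rw [Finset.sum_eq_single k]
  · rw [Nat.sub_self, pow_zero, Nat.choose_self, Nat.cast_one, mul_one, mul_one,
      ← map_pow, Algebra.algebraMap_eq_smul_one, _root_.map_smul, LinearMap.trace_one,
      smul_eq_mul, mul_comm]
  · intro j hjmem hjk
    have hkj : 1 ≤ k - j := by
      have : j ≤ k := Nat.lt_succ_iff.mp (Finset.mem_range.mp hjmem)
      omega
    have key : a ^ j * b ^ (k - j) * (k.choose j : Module.End ℂ _) =
        ((μ ^ j) * (k.choose j : ℂ)) • (b ^ (k - j)) := by
      rw [ha, ← map_pow, ← map_natCast (algebraMap ℂ (Module.End ℂ (f.maxGenEigenspace μ)))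
        (k.choose j), mul_assoc, ← Algebra.commutes ((k.choose j : ℕ) : ℂ) (b ^ (k - j)),
        ← mul_assoc, ← _root_.map_mul, ← Algebra.smul_def]
    rw [key, _root_.map_smul, hbpow _ hkj, smul_zero]
  · intro hk
    simp at hk

lemma eig_list {n : ℕ} (M : Matrix (Fin n) (Fin n) ℂ) :
    ∃ e : Fin n → ℂ,
      (∀ i, ∃ v : Fin n → ℂ, v ≠ 0 ∧ M.mulVec v = e i • v) ∧
      (∀ k : ℕ, (M ^ k).trace = ∑ i, (e i) ^ k) := by
  classical
  set f : Module.End ℂ (Fin n → ℂ) := M.mulVecLin with hf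
  have hsup : ⨆ μ, f.maxGenEigenspace μ = ⊤ := f.iSup_maxGenEigenspace_eq_top
  have hds := DirectSum.isInternal_submodule_of_iSupIndep_of_iSup_eq_top
    f.independent_maxGenEigenspace hsup
  have h_fin : {μ : ℂ | f.maxGenEigenspace μ ≠ ⊥}.Finite :=
    WellFoundedGT.finite_ne_bot_of_iSupIndep f.independent_maxGenEigenspace
  set s := h_fin.toFinset with hs
  set m : ℂ → ℕ := fun μ => finrank ℂ (f.maxGenEigenspace μ) with hm
  have key : ∀ k : ℕ, (M ^ k).trace = ∑ μ ∈ s, (m μ : ℂ) * μ ^ k := by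
    intro k
    have hmapsk : ∀ μ : ℂ, MapsTo (f ^ k) (f.maxGenEigenspace μ) (f.maxGenEigenspace μ) :=
      fun μ => f.mapsTo_maxGenEigenspace_of_comm ((Commute.refl f).pow_right k) μ
    rw [trace_pow_eq, LinearMap.trace_eq_sum_trace_restrict' hds h_fin hmapsk]
    exact Finset.sum_congr rfl fun μ _ => trace_restrict_pow f μ k (hmapsk μ)
  -- build the multiset of eigenvalues with multiplicity
  set T : Multiset ℂ := s.1.bind (fun μ => Multiset.replicate (m μ) μ) with hT
  have hTsum : ∀ k : ℕ, (T.map (fun x => x ^ k)).sum = ∑ μ ∈ s, (m μ : ℂ) * μ ^ k := by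
    intro k
    rw [hT, Multiset.map_bind, Multiset.sum_bind]
    rw [Finset.sum_eq_multiset_sum]
    congr 1
    apply Multiset.map_congr rfl
    intro μ _
    rw [Multiset.map_replicate, Multiset.sum_replicate, nsmul_eq_mul]
  have h0 : (n : ℂ) = ∑ μ ∈ s, (m μ : ℂ) := by
    have h1 := key 0
    simp only [pow_zero, mul_one, Matrix.trace_one, Fintype.card_fin] at h1
    exact_mod_cast h1
  have hcardsum : Multiset.card T = ∑ μ ∈ s, m μ := by
    rw [hT, Multiset.card_bind, Finset.sum_eq_multiset_sum]
    congr 1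
    apply Multiset.map_congr rfl
    intro μ _
    simp
  have hcardn : Multiset.card T = n := by
    have : (Multiset.card T : ℂ) = (n : ℂ) := by
      rw [hcardsum, h0]; push_cast; ring
    exact_mod_cast this
  set l : List ℂ := T.toList with hl
  have hlen : l.length = n := by rw [hl, Multiset.length_toList, hcardn]
  set e : Fin n → ℂ := fun i => l.get (Fin.cast hlen.symm i) with he
  refine ⟨e, ?_, ?_⟩
  · intro i
    have hmem : e i ∈ T := by
      rw [← Multiset.mem_toList]
      exact List.get_mem l _
    have : ∃ μ ∈ s, e i ∈ Multiset.replicate (m μ) μ := by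
      rw [hT] at hmem
      simpa using Multiset.mem_bind.mp hmem
    obtain ⟨μ, hμs, hμmem⟩ := this
    have heq : e i = μ := (Multiset.eq_of_mem_replicate hμmem)
    have hne : f.maxGenEigenspace μ ≠ ⊥ := by
      rw [hs] at hμs; exact (Set.Finite.mem_toFinset h_fin).mp hμs
    have heig : f.HasEigenvalue μ := by
      have : f.HasUnifEigenvalue μ ⊤ := hne
      exact this.lt zero_lt_one
    obtain ⟨v, hv⟩ := heig.exists_hasEigenvector
    refine ⟨v, hv.right, ?_⟩
    rw [heq]
    have := hv.apply_eq_smul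
    simpa [hf] using this
  · intro k
    rw [key k, ← hTsum k]
    have h2 : (T.map (fun x => x ^ k)).sum = ((l.map (fun x => x ^ k)).sum) := by
      have h5 : T = (↑l : Multiset ℂ) := by rw [hl, Multiset.coe_toList]
      rw [h5, Multiset.map_coe, Multiset.sum_coe]
    rw [h2]
    have h3 : ∑ i, (e i) ^ k = ∑ i : Fin l.length, (l.get i) ^ k := by
      rw [he]
      exact (Fin.sum_congr' _ hlen).symm
    rw [h3]
    conv_lhs => rw [← List.ofFn_get l]
    rw [List.map_ofFn, List.sum_ofFn]
    simp

lemma exists_distinct_eigs (M : Matrix (Fin n) (Fin n) ℂ) (h : gdisc M ≠ 0) :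
    ∃ ev : Fin n → ℂ, Function.Injective ev ∧
      ∀ i, ∃ v : Fin n → ℂ, v ≠ 0 ∧ M.mulVec v = ev i • v := by
  obtain ⟨e, hev, htr⟩ := eig_list M
  have hg : gdisc M = (∏ i : Fin n, ∏ j ∈ Finset.Ioi i, (e j - e i)) ^ 2 :=
    gdisc_of_traces htr
  have hinj : Function.Injective e := by
    intro a b hab
    by_contra hne
    have hlt : ∃ p q : Fin n, p < q ∧ e q - e p = 0 := by
      rcases lt_trichotomy a b with hc | hc | hc
      · exact ⟨a, b, hc, by rw [hab, sub_self]⟩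
      · exact absurd hc hne
      · exact ⟨b, a, hc, by rw [hab, sub_self]⟩
    obtain ⟨p, q, hpq, hzero⟩ := hlt
    apply h
    rw [hg]
    have : (∏ i : Fin n, ∏ j ∈ Finset.Ioi i, (e j - e i)) = 0 :=
      Finset.prod_eq_zero (Finset.mem_univ p)
        (Finset.prod_eq_zero (Finset.mem_Ioi.mpr hpq) hzero)
    rw [this]
    ring
  exact ⟨e, hinj, hev⟩

lemma gdisc_diagonal_ne_zero {e : Fin n → ℂ} (he : Function.Injective e) :
    gdisc (Matrix.diagonal e) ≠ 0 := by
  have htr : ∀ k : ℕ, ((Matrix.diagonal e) ^ k).trace = ∑ i, e i ^ k := by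
    intro k
    rw [Matrix.diagonal_pow, Matrix.trace_diagonal]
    rfl
  rw [gdisc_of_traces htr]
  apply pow_ne_zero
  apply Finset.prod_ne_zero_iff.mpr
  intro p _
  apply Finset.prod_ne_zero_iff.mpr
  intro q hq
  have hpq : q ≠ p := (Finset.mem_Ioi.mp hq).ne'
  exact sub_ne_zero_of_ne fun hc => hpq (he hc)

/-- the fixed diagonal perturbation -/
noncomputable def DD (n : ℕ) : Matrix (Fin n) (Fin n) ℂ :=
  Matrix.diagonal fun i : Fin n => (((i : ℕ) + 1 : ℕ) : ℂ)

lemma exists_poly (A : Matrix (Fin n) (Fin n) ℂ) :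
    ∃ Qp Rp : Polynomial ℂ, Qp ≠ 0 ∧ Rp ≠ 0 ∧
      ∀ s : ℂ,
        Qp.eval s = gdisc ((s • A + DD n).adjugate *
          (s • (A.map (starRingEnd ℂ)) + DD n).adjugate) ∧
        Rp.eval s = (s • A + DD n).det := by
  classical
  set Abar := A.map (starRingEnd ℂ) with hAbar
  set F : Matrix (Fin n) (Fin n) (Polynomial ℂ) :=
    (Polynomial.X : Polynomial ℂ) • A.map Polynomial.C + (DD n).map Polynomial.C with hF
  set G : Matrix (Fin n) (Fin n) (Polynomial ℂ) :=
    (Polynomial.X : Polynomial ℂ) • Abar.map Polynomial.C + (DD n).map Polynomial.C with hG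
  set Np := F.adjugate * G.adjugate with hNp
  set Qp : Polynomial ℂ := gdisc Np with hQp
  set Rp : Polynomial ℂ := F.det with hRp
  have hFeval : ∀ s : ℂ, F.map (Polynomial.evalRingHom s) = s • A + DD n := by
    intro s
    ext i j
    rw [hF]
    simp only [Matrix.map_apply, Matrix.add_apply, Matrix.smul_apply, Matrix.map_apply,
      smul_eq_mul]
    rw [coe_evalRingHom, eval_add, eval_mul, eval_X, eval_C, eval_C]
  have hGeval : ∀ s : ℂ, G.map (Polynomial.evalRingHom s) = s • Abar + DD n := by
    intro s
    ext i j
    rw [hG]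
    simp only [Matrix.map_apply, Matrix.add_apply, Matrix.smul_apply, Matrix.map_apply,
      smul_eq_mul]
    rw [coe_evalRingHom, eval_add, eval_mul, eval_X, eval_C, eval_C]
  have heval : ∀ s : ℂ,
      Qp.eval s = gdisc ((s • A + DD n).adjugate * (s • Abar + DD n).adjugate) := by
    intro s
    have h1 : Qp.eval s = (Polynomial.evalRingHom s) (gdisc Np) := rfl
    rw [h1, ← gdisc_map (Polynomial.evalRingHom s) Np]
    congr 1
    rw [hNp, Matrix.map_mul]
    congr 1
    · have := RingHom.map_adjugate (Polynomial.evalRingHom s) F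
      rw [RingHom.mapMatrix_apply, RingHom.mapMatrix_apply] at this
      rw [this, hFeval]
    · have := RingHom.map_adjugate (Polynomial.evalRingHom s) G
      rw [RingHom.mapMatrix_apply, RingHom.mapMatrix_apply] at this
      rw [this, hGeval]
  have hReval : ∀ s : ℂ, Rp.eval s = (s • A + DD n).det := by
    intro s
    have := RingHom.map_det (Polynomial.evalRingHom s) F
    rw [RingHom.mapMatrix_apply] at this
    rw [hRp, ← hFeval s, ← this]
    rfl
  -- nonvanishing at zero
  have hzeroA : ∀ B : Matrix (Fin n) (Fin n) ℂ, (0 : ℂ) • B + DD n = DD n := by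
    intro B; rw [zero_smul, zero_add]
  have hQ0 : Qp.eval 0 ≠ 0 := by
    rw [heval 0, hzeroA, hzeroA]
    rw [DD, Matrix.adjugate_diagonal, Matrix.diagonal_mul_diagonal]
    apply gdisc_diagonal_ne_zero
    intro a b hab
    have hcast : ∀ i : Fin n,
        (∏ j ∈ Finset.univ.erase i, (((j : ℕ) + 1 : ℕ) : ℂ)) =
          ((∏ j ∈ Finset.univ.erase i, ((j : ℕ) + 1) : ℕ) : ℂ) := by
      intro i; push_cast; rfl
    set mN : Fin n → ℕ := fun i => ∏ j ∈ Finset.univ.erase i, ((j : ℕ) + 1) with hmN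
    have hab' : (mN a : ℂ) * (mN a : ℂ) = (mN b : ℂ) * (mN b : ℂ) := by
      rw [← hcast a, ← hcast b]; exact hab
    have habN : mN a * mN a = mN b * mN b := by exact_mod_cast hab'
    have hpos : ∀ i, 0 < mN i := by
      intro i
      apply Finset.prod_pos
      intro j _
      omega
    have hmm : mN a = mN b := by
      nlinarith [hpos a, hpos b]
    have htot : ∀ i : Fin n, mN i * ((i : ℕ) + 1) = ∏ j : Fin n, ((j : ℕ) + 1) := by
      intro i
      rw [hmN]
      exact Finset.prod_erase_mul Finset.univ _ (Finset.mem_univ i)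
    have : mN a * ((a : ℕ) + 1) = mN a * ((b : ℕ) + 1) := by
      rw [htot a, hmm, htot b]
    have : (a : ℕ) = (b : ℕ) := by
      have := Nat.eq_of_mul_eq_mul_left (hpos a) this
      omega
    exact Fin.ext this
  have hR0 : Rp.eval 0 ≠ 0 := by
    rw [hReval 0, hzeroA, DD, Matrix.det_diagonal]
    apply Finset.prod_ne_zero_iff.mpr
    intro i _
    exact_mod_cast Nat.succ_ne_zero (i : ℕ)
  refine ⟨Qp, Rp, ?_, ?_, fun s => ⟨heval s, hReval s⟩⟩
  · intro h; rw [h] at hQ0; simp at hQ0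
  · intro h; rw [h] at hR0; simp at hR0

end Aux

/-- Invertible symmetric matrices `A` such that `A⁻¹ conj(A⁻¹)`
has `n` pairwise distinct eigenvalues are dense among all symmetric complex
`n×n` matrices. -/
theorem stmt6 {n : ℕ} :
    {A : Matrix (Fin n) (Fin n) ℂ | A.IsSymm} ⊆
      closure {A : Matrix (Fin n) (Fin n) ℂ | A.IsSymm ∧ A.det ≠ 0 ∧
        ∃ ev : Fin n → ℂ, Function.Injective ev ∧
          ∀ i, ∃ v : Fin n → ℂ, v ≠ 0 ∧
            (A⁻¹ * (A⁻¹).map (starRingEnd ℂ)).mulVec v = ev i • v} := by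
  intro A hA
  rw [mem_closure_iff_nhds]
  intro U hU
  obtain ⟨Qp, Rp, hQne, hRne, hpoly⟩ := exists_poly A
  -- continuity of the perturbation path
  have hcont : Continuous (fun t : ℝ => A + (t : ℂ) • DD n) := by
    apply continuous_const.add
    exact (Complex.continuous_ofReal.smul continuous_const)
  have hA0 : A + ((0 : ℝ) : ℂ) • DD n = A := by simp
  have hW : (fun t : ℝ => A + (t : ℂ) • DD n) ⁻¹' U ∈ nhds (0 : ℝ) := by
    apply hcont.continuousAt.preimage_mem_nhds
    rw [hA0]
    exact hU
  obtain ⟨δ, hδpos, hball⟩ := Metric.mem_nhds_iff.mp hW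
  -- the bad set of parameters
  set Sfin : Finset ℂ := Qp.roots.toFinset ∪ Rp.roots.toFinset with hSfin
  have hfinj : Function.Injective (fun t : ℝ => ((t : ℂ))⁻¹) := by
    intro a b hab
    have : ((a : ℂ)) = b := inv_injective hab
    exact_mod_cast this
  have hbadfin : ((fun t : ℝ => ((t : ℂ))⁻¹) ⁻¹' (Sfin : Set ℂ)).Finite :=
    Set.Finite.preimage hfinj.injOn (Sfin.finite_toSet)
  have hIoo : (Set.Ioo (0 : ℝ) δ).Infinite := Set.Ioo_infinite hδpos
  obtain ⟨t, ht⟩ := (hIoo.diff hbadfin).nonempty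
  obtain ⟨⟨ht0, htδ⟩, htbad⟩ := ht
  have htne : (t : ℂ) ≠ 0 := by exact_mod_cast ht0.ne'
  set s : ℂ := ((t : ℂ))⁻¹ with hs
  have hts : (t : ℂ) * s = 1 := mul_inv_cancel₀ htne
  set B : Matrix (Fin n) (Fin n) ℂ := A + (t : ℂ) • DD n with hB
  have hBU : B ∈ U := hball (by simpa [Real.dist_eq, abs_of_pos ht0] using htδ)
  -- s is not a root
  have hQs : Qp.eval s ≠ 0 := by
    intro hc
    exact htbad (Finset.mem_coe.mpr (Finset.mem_union_left _
      (Multiset.mem_toFinset.mpr ((Polynomial.mem_roots hQne).mpr hc))))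
  have hRs : Rp.eval s ≠ 0 := by
    intro hc
    exact htbad (Finset.mem_coe.mpr (Finset.mem_union_right _
      (Multiset.mem_toFinset.mpr ((Polynomial.mem_roots hRne).mpr hc))))
  set Abar := A.map (starRingEnd ℂ) with hAbar
  set Cm := s • A + DD n with hCm
  set Cmbar := s • Abar + DD n with hCmbar
  have hBt : B = (t : ℂ) • Cm := by
    rw [hB, hCm, smul_add, smul_smul, hts, one_smul]
  have hDDbar : ∀ i j : Fin n, (starRingEnd ℂ) (DD n i j) = DD n i j := by
    intro i j
    rcases eq_or_ne i j with rfl | hij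
    · simp [DD, Matrix.diagonal_apply_eq]
    · simp [DD, Matrix.diagonal_apply_ne _ hij]
  have hBbar : B.map (starRingEnd ℂ) = (t : ℂ) • Cmbar := by
    have h1 : B.map (starRingEnd ℂ) = Abar + (t : ℂ) • DD n := by
      rw [hB, hAbar]
      ext i j
      simp only [Matrix.map_apply, Matrix.add_apply, Matrix.smul_apply, smul_eq_mul,
        map_add, _root_.map_mul, Complex.conj_ofReal, hDDbar i j]
    rw [h1, hCmbar, smul_add, smul_smul, hts, one_smul]
  -- determinant facts
  have hdetCm : Cm.det = Rp.eval s := ((hpoly s).2).symm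
  have hdetB : B.det ≠ 0 := by
    rw [hBt, Matrix.det_smul, hdetCm]
    apply mul_ne_zero (pow_ne_zero _ htne) hRs
  have hdetBbar : (B.map (starRingEnd ℂ)).det ≠ 0 := by
    have := RingHom.map_det (starRingEnd ℂ) B
    rw [RingHom.mapMatrix_apply] at this
    rw [← this, starRingEnd_apply]
    exact star_ne_zero.mpr hdetB
  -- the scaled adjugate product
  set N0 := Cm.adjugate * Cmbar.adjugate with hN0
  have hgN0 : gdisc N0 ≠ 0 := by rw [hN0, ← (hpoly s).1]; exact hQs
  set NB := B.adjugate * (B.map (starRingEnd ℂ)).adjugate with hNB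
  have hNBsmul : NB = ((t : ℂ) ^ (n - 1) * (t : ℂ) ^ (n - 1)) • N0 := by
    rw [hNB, hBbar, hBt, Matrix.adjugate_smul, Matrix.adjugate_smul, hN0,
      smul_mul_assoc, Matrix.mul_smul, smul_smul, Fintype.card_fin]
  have hgNB : gdisc NB ≠ 0 := by
    rw [hNBsmul, gdisc_smul]
    apply mul_ne_zero _ hgN0
    apply pow_ne_zero
    apply Finset.prod_ne_zero_iff.mpr
    intro i _
    exact pow_ne_zero _ (mul_ne_zero (pow_ne_zero _ htne) (pow_ne_zero _ htne))
  obtain ⟨μ, hμinj, hμeig⟩ := exists_distinct_eigs NB hgNB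
  -- assemble membership
  refine ⟨B, hBU, ?_, ?_, ?_⟩
  · -- symmetric
    have hAt : Aᵀ = A := hA
    show Bᵀ = B
    rw [hB, Matrix.transpose_add, Matrix.transpose_smul, hAt, DD, Matrix.diagonal_transpose]
  · exact hdetB
  · -- eigenvalues
    have hinvmap : (B⁻¹).map (starRingEnd ℂ) = (B.map (starRingEnd ℂ))⁻¹ := by
      have h1 : B.map (starRingEnd ℂ) = (Bᴴ)ᵀ := by
        rw [Matrix.conjTranspose, Matrix.transpose_map, Matrix.transpose_transpose]
        rfl
      rw [h1, ← Matrix.transpose_nonsing_inv, ← Matrix.conjTranspose_nonsing_inv,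
        Matrix.conjTranspose, Matrix.transpose_map, Matrix.transpose_transpose]
      rfl
    set γ : ℂ := (B.det)⁻¹ * ((B.map (starRingEnd ℂ)).det)⁻¹ with hγ
    have hγne : γ ≠ 0 := mul_ne_zero (inv_ne_zero hdetB) (inv_ne_zero hdetBbar)
    have hkey : B⁻¹ * (B⁻¹).map (starRingEnd ℂ) = γ • NB := by
      rw [hinvmap, Matrix.inv_def, Matrix.inv_def, Ring.inverse_eq_inv, Ring.inverse_eq_inv,
        hγ, hNB, smul_mul_assoc, Matrix.mul_smul, smul_smul]
    refine ⟨fun i => γ * μ i, ?_, ?_⟩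
    · intro a b hab
      exact hμinj (mul_left_cancel₀ hγne hab)
    · intro i
      obtain ⟨v, hvne, hv⟩ := hμeig i
      refine ⟨v, hvne, ?_⟩
      rw [hkey, Matrix.smul_mulVec, hv, smul_smul]
end

section
/- Let λ₁, ..., λₙ be nonzero complex numbers with pairwise distinct absolute values, f(z) = Σⱼ λⱼ zⱼ², and Σ = { z ∈ ℂⁿ : ∃ ξ ∈ ℂ, 2 conj(λⱼ) conj(zⱼ) = ξ zⱼ for all j }. Then Σ \ {0} = ⋃ᵢ Σᵢ where Σᵢ = { z : zⱼ = 0 for j ≠ i, zᵢ ≠ 0 }; in other words, the variety of contacts of the foliation df = 0 with concentric spheres is the union of the n coordinate axes. -/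
/-- For `f(z) = Σ λⱼ zⱼ²` with the `λⱼ` nonzero of pairwise
distinct absolute values, the variety of contacts
`Σ = {z : ∃ ξ, 2 conj(λⱼ) conj(zⱼ) = ξ zⱼ ∀ j}` minus the origin is the union
of the punctured coordinate axes. -/
theorem stmt14 {n : ℕ} (lam : Fin n → ℂ) (hlam : ∀ j, lam j ≠ 0)
    (hdist : ∀ i j, i ≠ j → ‖lam i‖ ≠ ‖lam j‖) :
    {z : Fin n → ℂ | ∃ ξ : ℂ, ∀ j,
        2 * starRingEnd ℂ (lam j) * starRingEnd ℂ (z j) = ξ * z j} \ {0}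
      = ⋃ i, {z : Fin n → ℂ | (∀ j, j ≠ i → z j = 0) ∧ z i ≠ 0} := by
  ext z
  simp only [Set.mem_diff, Set.mem_setOf_eq, Set.mem_singleton_iff, Set.mem_iUnion]
  constructor
  · rintro ⟨⟨ξ, hξ⟩, hz⟩
    obtain ⟨i, hi⟩ : ∃ i, z i ≠ 0 := by
      by_contra h
      push_neg at h
      exact hz (funext h)
    refine ⟨i, fun j hj => ?_, hi⟩
    by_contra hzj
    have key : ∀ k, z k ≠ 0 → ‖ξ‖ = 2 * ‖lam k‖ := by
      intro k hk
      have := congrArg (fun w : ℂ => ‖w‖) (hξ k)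
      simp only [norm_mul, Complex.norm_conj] at this
      have habs : ‖z k‖ ≠ 0 := norm_ne_zero_iff.mpr hk
      have h2 : ‖(2 : ℂ)‖ = 2 := by simp
      rw [h2] at this
      exact (mul_right_cancel₀ habs this).symm
    have h1 := key i hi
    have h2 := key j hzj
    exact hdist i j (Ne.symm hj) (by linarith)
  · rintro ⟨i, hj0, hi⟩
    refine ⟨⟨2 * starRingEnd ℂ (lam i) * starRingEnd ℂ (z i) / z i, fun j => ?_⟩, ?_⟩
    · rcases eq_or_ne j i with rfl | hne
      · field_simp
      · rw [hj0 j hne]; simp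
    · intro h
      exact hi (congrFun h i)
end

section
/- Let λ₁, ..., λₙ be nonzero complex numbers with |λ₁| > |λ₂| > ... > |λₙ|, and let aᵢ + i bᵢ = λᵢ/λ₁. On the leaf L_c = { z ∈ ℂⁿ : Σⱼ λⱼ zⱼ² = c } through a point p = (w₁, 0, ..., 0) with λ₁ w₁² = c, w₁ ≠ 0, the real Hessian of the restricted squared-distance function φ(z) = Σ|zⱼ|² at p has eigenvalues 1 ± |λᵢ/λ₁| for i = 2, ..., n (each appearing once, up to an overall positive factor 2). Consequently p is a nondegenerate critical point of φ|_{L_c} of Morse index 0. -/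
open Complex Filter

namespace Stmt18
noncomputable section
variable {m : ℕ}


def P (j : Fin m) : (Fin m → ℂ) →L[ℝ] ℂ := ContinuousLinearMap.proj j

@[simp] lemma P_apply (j : Fin m) (y : Fin m → ℂ) : P j y = y j := rfl

variable (μ : Fin m → ℂ) (w : ℂ)

def hfun (y : Fin m → ℂ) : ℂ := w ^ 2 - ∑ j, μ j * (y j * y j)

def hder (y : Fin m → ℂ) : (Fin m → ℂ) →L[ℝ] ℂ := ∑ j, (-(2 * μ j * y j)) • P j

lemma hasFDerivAt_hfun (y : Fin m → ℂ) : HasFDerivAt (hfun μ w) (hder μ y) y := by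
  have h1 : HasFDerivAt (fun y : Fin m → ℂ => ∑ j, μ j * (y j * y j))
      (∑ j, μ j • (y j • P j + y j • P j)) y := by
    apply HasFDerivAt.fun_sum
    intro j _
    exact (((P j).hasFDerivAt).mul ((P j).hasFDerivAt)).const_mul (μ j)
  have h2 := h1.const_sub (w ^ 2)
  refine h2.congr_fderiv ?_
  ext u
  simp [hder, ContinuousLinearMap.sum_apply, ← Finset.sum_neg_distrib]
  apply Finset.sum_congr rfl
  intro j _
  ring



lemma hasFDerivAt_normSq_comp {f : (Fin m → ℂ) → ℂ} {f' : (Fin m → ℂ) →L[ℝ] ℂ}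
    {y : Fin m → ℂ} (hf : HasFDerivAt f f' y) :
    HasFDerivAt (fun y => Complex.normSq (f y))
      ((2 * (f y).re) • (Complex.reCLM.comp f') + (2 * (f y).im) • (Complex.imCLM.comp f')) y := by
  have hre : HasFDerivAt (fun y => (f y).re) (Complex.reCLM.comp f') y :=
    Complex.reCLM.hasFDerivAt.comp y hf
  have him : HasFDerivAt (fun y => (f y).im) (Complex.imCLM.comp f') y :=
    Complex.imCLM.hasFDerivAt.comp y hf
  have h := (hre.mul hre).add (him.mul him)
  have heq : (fun y => Complex.normSq (f y))
      = fun y => (f y).re * (f y).re + (f y).im * (f y).im := by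
    funext y; simp [Complex.normSq_apply]
  rw [heq]
  refine h.congr_fderiv ?_
  ext u
  simp [ContinuousLinearMap.add_apply, ContinuousLinearMap.smul_apply]
  ring

variable (μ : Fin m → ℂ) (w : ℂ)

def Afun (y : Fin m → ℂ) : ℝ := Complex.normSq (hfun μ w y)

def Ader (y : Fin m → ℂ) : (Fin m → ℂ) →L[ℝ] ℝ :=
  (2 * (hfun μ w y).re) • (Complex.reCLM.comp (hder μ y))
    + (2 * (hfun μ w y).im) • (Complex.imCLM.comp (hder μ y))

lemma hasFDerivAt_Afun (y : Fin m → ℂ) : HasFDerivAt (Afun μ w) (Ader μ w y) y :=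
  hasFDerivAt_normSq_comp (hasFDerivAt_hfun μ w y)

def sder (y : Fin m → ℂ) : (Fin m → ℂ) →L[ℝ] ℝ :=
  (1 / (2 * Real.sqrt (Afun μ w y))) • Ader μ w y

lemma hasFDerivAt_sqrtA {y : Fin m → ℂ} (hy : Afun μ w y ≠ 0) :
    HasFDerivAt (fun y => Real.sqrt (Afun μ w y)) (sder μ w y) y :=
  (Real.hasDerivAt_sqrt hy).comp_hasFDerivAt y (hasFDerivAt_Afun μ w y)

def Sfun (y : Fin m → ℂ) : ℝ := ∑ j, Complex.normSq (y j)

def Sder (y : Fin m → ℂ) : (Fin m → ℂ) →L[ℝ] ℝ :=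
  ∑ j, ((2 * (y j).re) • (Complex.reCLM.comp (P j))
    + (2 * (y j).im) • (Complex.imCLM.comp (P j)))

lemma hasFDerivAt_Sfun (y : Fin m → ℂ) : HasFDerivAt (Sfun (m := m)) (Sder y) y := by
  apply HasFDerivAt.fun_sum
  intro j _
  exact hasFDerivAt_normSq_comp ((P j).hasFDerivAt)

def phi (y : Fin m → ℂ) : ℝ := Real.sqrt (Afun μ w y) + Sfun y

def phider (y : Fin m → ℂ) : (Fin m → ℂ) →L[ℝ] ℝ := sder μ w y + Sder y

lemma hasFDerivAt_phi {y : Fin m → ℂ} (hy : Afun μ w y ≠ 0) :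
    HasFDerivAt (phi μ w) (phider μ w y) y :=
  (hasFDerivAt_sqrtA μ w hy).add (hasFDerivAt_Sfun y)

@[simp] lemma hder_zero : hder μ (0 : Fin m → ℂ) = 0 := by
  ext u; simp [hder]

@[simp] lemma hfun_zero : hfun μ w (0 : Fin m → ℂ) = w ^ 2 := by simp [hfun]

@[simp] lemma Ader_zero : Ader μ w (0 : Fin m → ℂ) = 0 := by
  simp [Ader]

@[simp] lemma Sder_zero : Sder (0 : Fin m → ℂ) = 0 := by
  ext u; simp [Sder]

@[simp] lemma phider_zero : phider μ w (0 : Fin m → ℂ) = 0 := by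
  simp [phider, sder]


def B : (Fin m → ℂ) →L[ℝ] ((Fin m → ℂ) →L[ℝ] ℂ) :=
  ∑ j, ((-(2 * μ j)) • P j).smulRight (P j)

lemma hasFDerivAt_hder : HasFDerivAt (fun y => hder μ y) (B μ) 0 := by
  apply HasFDerivAt.fun_sum
  intro j _
  have hc : HasFDerivAt (fun y : Fin m → ℂ => -(2 * μ j * y j)) ((-(2 * μ j)) • P j) 0 := by
    have h1 := (((P j).hasFDerivAt (x := 0)).const_mul (2 * μ j)).neg
    refine h1.congr_fderiv ?_
    ext u; simp
  exact hc.smul_const (P j)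

def CompRe : ((Fin m → ℂ) →L[ℝ] ℂ) →L[ℝ] ((Fin m → ℂ) →L[ℝ] ℝ) :=
  ContinuousLinearMap.compL ℝ (Fin m → ℂ) ℂ ℝ Complex.reCLM

def CompIm : ((Fin m → ℂ) →L[ℝ] ℂ) →L[ℝ] ((Fin m → ℂ) →L[ℝ] ℝ) :=
  ContinuousLinearMap.compL ℝ (Fin m → ℂ) ℂ ℝ Complex.imCLM

def Bsec : (Fin m → ℂ) →L[ℝ] ((Fin m → ℂ) →L[ℝ] ℝ) :=
  (2 * (w ^ 2).re) • ((CompRe (m := m)).comp (B μ)) + (2 * (w ^ 2).im) • ((CompIm (m := m)).comp (B μ))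

lemma hasFDerivAt_Ader : HasFDerivAt (fun y => Ader μ w y) (Bsec μ w) 0 := by
  have hB := hasFDerivAt_hder μ
  have hre : HasFDerivAt (fun y => Complex.reCLM.comp (hder μ y)) ((CompRe (m := m)).comp (B μ)) 0 :=
    (CompRe (m := m)).hasFDerivAt.comp 0 hB
  have him : HasFDerivAt (fun y => Complex.imCLM.comp (hder μ y)) ((CompIm (m := m)).comp (B μ)) 0 :=
    (CompIm (m := m)).hasFDerivAt.comp 0 hB
  have hc1 : HasFDerivAt (fun y => 2 * (hfun μ w y).re)
      ((2 : ℝ) • (Complex.reCLM.comp (hder μ 0))) 0 :=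
    (Complex.reCLM.hasFDerivAt.comp 0 (hasFDerivAt_hfun μ w 0)).const_mul 2
  have hc2 : HasFDerivAt (fun y => 2 * (hfun μ w y).im)
      ((2 : ℝ) • (Complex.imCLM.comp (hder μ 0))) 0 :=
    (Complex.imCLM.hasFDerivAt.comp 0 (hasFDerivAt_hfun μ w 0)).const_mul 2
  have h := (hc1.smul hre).add (hc2.smul him)
  refine h.congr_fderiv ?_
  ext u v
  simp [Bsec]

def SB : (Fin m → ℂ) →L[ℝ] ((Fin m → ℂ) →L[ℝ] ℝ) :=
  ∑ j, ((((2 : ℝ) • (Complex.reCLM.comp (P j))).smulRight (Complex.reCLM.comp (P j)))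
    + (((2 : ℝ) • (Complex.imCLM.comp (P j))).smulRight (Complex.imCLM.comp (P j))))

lemma hasFDerivAt_Sder : HasFDerivAt (fun y : Fin m → ℂ => Sder y) (SB (m := m)) 0 := by
  apply HasFDerivAt.fun_sum
  intro j _
  have hc1 : HasFDerivAt (fun y : Fin m → ℂ => 2 * (y j).re)
      ((2 : ℝ) • (Complex.reCLM.comp (P j))) 0 :=
    (Complex.reCLM.hasFDerivAt.comp 0 ((P j).hasFDerivAt)).const_mul 2
  have hc2 : HasFDerivAt (fun y : Fin m → ℂ => 2 * (y j).im)
      ((2 : ℝ) • (Complex.imCLM.comp (P j))) 0 :=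
    (Complex.imCLM.hasFDerivAt.comp 0 ((P j).hasFDerivAt)).const_mul 2
  exact (hc1.smul_const _).add (hc2.smul_const (Complex.imCLM.comp (P j)))

def T : (Fin m → ℂ) →L[ℝ] ((Fin m → ℂ) →L[ℝ] ℝ) :=
  (1 / (2 * Real.sqrt (Afun μ w 0))) • Bsec μ w + SB

lemma Afun_zero_ne (hw : w ≠ 0) : Afun μ w 0 ≠ 0 := by
  simp [Afun, Complex.normSq_eq_zero]
  exact hw

lemma hasFDerivAt_phider (hw : w ≠ 0) :
    HasFDerivAt (fun y => phider μ w y) (T μ w) 0 := by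
  have hA0 : Afun μ w 0 ≠ 0 := Afun_zero_ne μ w hw
  have hApos : 0 < Afun μ w 0 := Complex.normSq_pos.2 (by simpa [hfun] using pow_ne_zero 2 hw)
  have hsq : (2 : ℝ) * Real.sqrt (Afun μ w 0) ≠ 0 := by
    have := Real.sqrt_pos.2 hApos
    positivity
  have h2s : DifferentiableAt ℝ (fun y => 2 * Real.sqrt (Afun μ w y)) 0 :=
    ((hasFDerivAt_sqrtA μ w hA0).differentiableAt).const_mul 2
  have hdc : DifferentiableAt ℝ (fun y => 1 / (2 * Real.sqrt (Afun μ w y))) 0 := by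
    simp only [one_div]
    exact h2s.inv hsq
  have h := (hdc.hasFDerivAt.smul (hasFDerivAt_Ader μ w)).add (hasFDerivAt_Sder (m := m))
  refine h.congr_fderiv ?_
  ext u v
  simp [T]


lemma Bvu (v u : Fin m → ℂ) : B μ v u = (-2 : ℂ) * ∑ j, μ j * (v j * u j) := by
  simp [B, ContinuousLinearMap.sum_apply, ContinuousLinearMap.smulRight_apply,
    ContinuousLinearMap.smul_apply, Finset.mul_sum]
  apply Finset.sum_congr rfl
  intro j _
  ring

lemma sqrt_Afun_zero : Real.sqrt (Afun μ w 0) = ‖w ^ 2‖ := by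
  rw [show Afun μ w 0 = Complex.normSq (w ^ 2) by simp [Afun]]
  exact (Complex.norm_def _).symm

set_option maxHeartbeats 1000000 in
set_option synthInstance.maxHeartbeats 400000 in
lemma T_apply (hw : w ≠ 0) (v u : Fin m → ℂ) :
    T μ w v u = 2 * (∑ j, v j * (starRingEnd ℂ) (u j)).re
      - 2 * (((starRingEnd ℂ) (w ^ 2) / (‖w ^ 2‖ : ℂ))
          * ∑ j, μ j * (v j * u j)).re := by
  set q : ℂ := ∑ j, μ j * (v j * u j) with hq
  set r : ℝ := ‖w ^ 2‖ with hr
  have hrpos : 0 < r := by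
    rw [hr]
    exact norm_pos_iff.2 (pow_ne_zero 2 hw)
  have hT : T μ w v u
      = (1 / (2 * r)) * (2 * (w ^ 2).re * (B μ v u).re + 2 * (w ^ 2).im * (B μ v u).im)
        + ∑ j, (2 * (v j).re * (u j).re + 2 * (v j).im * (u j).im) := by
    simp [T, Bsec, SB, CompRe, CompIm, ContinuousLinearMap.add_apply,
      ContinuousLinearMap.smul_apply, ContinuousLinearMap.sum_apply,
      ContinuousLinearMap.smulRight_apply, ContinuousLinearMap.comp_apply,
      ContinuousLinearMap.compL_apply, sqrt_Afun_zero, ← hr, Finset.sum_add_distrib]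
    ring
  have key : ∀ z : ℂ, (z / (r : ℂ)).re = r⁻¹ * z.re := by
    intro z
    rw [div_eq_mul_inv, ← Complex.ofReal_inv, mul_comm, Complex.re_ofReal_mul]
  have h2 : ((starRingEnd ℂ) (w ^ 2) / (r : ℂ) * q).re
      = r⁻¹ * ((w ^ 2).re * q.re + (w ^ 2).im * q.im) := by
    rw [div_mul_eq_mul_div, key]
    simp only [Complex.mul_re, Complex.conj_re, Complex.conj_im]
    ring
  have h3 : (∑ j, v j * (starRingEnd ℂ) (u j)).re
      = ∑ j, ((v j).re * (u j).re + (v j).im * (u j).im) := by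
    rw [Complex.re_sum]
    apply Finset.sum_congr rfl
    intro j _
    simp only [Complex.mul_re, Complex.conj_re, Complex.conj_im]
    ring
  have hsum : (∑ j, (2 * (v j).re * (u j).re + 2 * (v j).im * (u j).im))
      = 2 * ∑ j, ((v j).re * (u j).re + (v j).im * (u j).im) := by
    rw [Finset.mul_sum]
    apply Finset.sum_congr rfl
    intro j _
    ring
  have hX : ((-2 : ℂ) * q).re = -2 * q.re := by simp [Complex.mul_re]
  have hX2 : ((-2 : ℂ) * q).im = -2 * q.im := by simp [Complex.mul_im]
  rw [hT, Bvu, hX, hX2, hsum, h2, h3]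
  field_simp
  ring

lemma forward_dir (μ : Fin m → ℂ) (α : ℂ) (hα : ‖α‖ = 1)
    (t : ℝ) (v : Fin m → ℂ) (hv : v ≠ 0)
    (hvt : ∀ u : Fin m → ℂ, 2 * (∑ j, v j * (starRingEnd ℂ) (u j)).re
        - 2 * (α * ∑ j, μ j * (v j * u j)).re
        = t * (∑ j, v j * (starRingEnd ℂ) (u j)).re) :
    ∃ j, t = 2 * (1 + ‖μ j‖) ∨ t = 2 * (1 - ‖μ j‖) := by
  set d : Fin m → ℂ := fun j =>
    ((2 - t : ℝ) : ℂ) * v j - 2 * (starRingEnd ℂ) (α * μ j * v j) with hd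
  have hdre : ∀ u : Fin m → ℂ, (∑ j, d j * (starRingEnd ℂ) (u j)).re = 0 := by
    intro u
    have e2 : ∑ j, (2 : ℂ) * (starRingEnd ℂ) (α * μ j * v j) * (starRingEnd ℂ) (u j)
        = 2 * (starRingEnd ℂ) (α * ∑ j, μ j * (v j * u j)) := by
      calc ∑ j, (2 : ℂ) * (starRingEnd ℂ) (α * μ j * v j) * (starRingEnd ℂ) (u j)
          = ∑ j, (2 : ℂ) * (starRingEnd ℂ) (α * (μ j * (v j * u j))) := by
            apply Finset.sum_congr rfl
            intro j _
            rw [mul_assoc, ← map_mul]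
            ring_nf
        _ = (2 : ℂ) * ∑ j, (starRingEnd ℂ) (α * (μ j * (v j * u j))) := by
            rw [← Finset.mul_sum]
        _ = (2 : ℂ) * (starRingEnd ℂ) (∑ j, α * (μ j * (v j * u j))) := by
            rw [map_sum]
        _ = (2 : ℂ) * (starRingEnd ℂ) (α * ∑ j, μ j * (v j * u j)) := by
            rw [Finset.mul_sum]
    have hsum : ∑ j, d j * (starRingEnd ℂ) (u j)
        = ((2 - t : ℝ) : ℂ) * (∑ j, v j * (starRingEnd ℂ) (u j))
          - 2 * (starRingEnd ℂ) (α * ∑ j, μ j * (v j * u j)) := by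
      rw [← e2, Finset.mul_sum, ← Finset.sum_sub_distrib]
      apply Finset.sum_congr rfl
      intro j _
      rw [hd]
      ring
    rw [hsum, Complex.sub_re, Complex.re_ofReal_mul]
    have e3 : ((2 : ℂ) * (starRingEnd ℂ) (α * ∑ j, μ j * (v j * u j))).re
        = 2 * (α * ∑ j, μ j * (v j * u j)).re := by
      simp only [Complex.mul_re, Complex.re_ofNat, Complex.im_ofNat, Complex.conj_re,
        Complex.conj_im]
      ring
    rw [e3]
    linarith [hvt u]
  have hdzero : ∀ j, d j = 0 := by
    intro j
    have h1 := hdre (Pi.single (M := fun _ : Fin m => ℂ) j (d j))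
    have h2 : ∑ k, d k * (starRingEnd ℂ) (Pi.single (M := fun _ : Fin m => ℂ) j (d j) k) = d j * (starRingEnd ℂ) (d j) := by
      have hz : ∀ k ∈ Finset.univ, k ≠ j →
          d k * (starRingEnd ℂ) (Pi.single (M := fun _ : Fin m => ℂ) j (d j) k) = 0 := by
        intro k _ hk
        rw [Pi.single_eq_of_ne hk]
        simp
      rw [Finset.sum_eq_single_of_mem j (Finset.mem_univ j) hz, Pi.single_eq_same]
    rw [h2, Complex.mul_conj] at h1
    simpa [Complex.normSq_eq_zero] using h1
  obtain ⟨j, hvj⟩ := Function.ne_iff.1 hv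
  refine ⟨j, ?_⟩
  have hj := hdzero j
  rw [hd, sub_eq_zero] at hj
  
  have habs := congrArg (‖·‖) hj
  simp only [norm_mul, Complex.norm_real, Real.norm_eq_abs, Complex.norm_conj, hα] at habs
  have hvj' : ‖v j‖ ≠ 0 := by simpa using hvj
  have habs2 : |2 - t| = 2 * ‖μ j‖ := by
    have h2abs : ‖(2 : ℂ)‖ = 2 := by
      exact Complex.norm_two
    rw [h2abs, one_mul] at habs
    apply mul_right_cancel₀ hvj'
    rw [habs]
    ring
  rcases (abs_eq (by positivity)).1 habs2 with h | h
  · right; linarith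
  · left; linarith

lemma eigen_check (μ : Fin m → ℂ) (α : ℂ) (j : Fin m) (t : ℝ) (ζ : ℂ) (hζ : ζ ≠ 0)
    (hkey2 : ((2 - t : ℝ) : ℂ) * ζ = 2 * (starRingEnd ℂ) (α * μ j) * (starRingEnd ℂ) ζ) :
    ∃ v : Fin m → ℂ, v ≠ 0 ∧ ∀ u : Fin m → ℂ,
      2 * (∑ k, v k * (starRingEnd ℂ) (u k)).re - 2 * (α * ∑ k, μ k * (v k * u k)).re
        = t * (∑ k, v k * (starRingEnd ℂ) (u k)).re := by
  refine ⟨Pi.single (M := fun _ : Fin m => ℂ) j ζ, ?_, ?_⟩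
  · intro h
    have := congrFun h j
    rw [Pi.single_eq_same] at this
    exact hζ this
  · intro u
    have s1 : ∑ k, Pi.single (M := fun _ : Fin m => ℂ) j ζ k * (starRingEnd ℂ) (u k)
        = ζ * (starRingEnd ℂ) (u j) := by
      have hz : ∀ k ∈ Finset.univ, k ≠ j →
          Pi.single (M := fun _ : Fin m => ℂ) j ζ k * (starRingEnd ℂ) (u k) = 0 := by
        intro k _ hk
        rw [Pi.single_eq_of_ne hk, zero_mul]
      rw [Finset.sum_eq_single_of_mem j (Finset.mem_univ j) hz, Pi.single_eq_same]
    have s2 : ∑ k, μ k * (Pi.single (M := fun _ : Fin m => ℂ) j ζ k * u k)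
        = μ j * (ζ * u j) := by
      have hz : ∀ k ∈ Finset.univ, k ≠ j →
          μ k * (Pi.single (M := fun _ : Fin m => ℂ) j ζ k * u k) = 0 := by
        intro k _ hk
        rw [Pi.single_eq_of_ne hk, zero_mul, mul_zero]
      rw [Finset.sum_eq_single_of_mem j (Finset.mem_univ j) hz, Pi.single_eq_same]
    rw [s1, s2]
    have e1 : (2 : ℂ) * (starRingEnd ℂ) (α * (μ j * (ζ * u j)))
        = ((2 - t : ℝ) : ℂ) * (ζ * (starRingEnd ℂ) (u j)) := by
      calc (2 : ℂ) * (starRingEnd ℂ) (α * (μ j * (ζ * u j)))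
          = (2 * (starRingEnd ℂ) (α * μ j) * (starRingEnd ℂ) ζ) * (starRingEnd ℂ) (u j) := by
            simp only [map_mul]
            ring
        _ = (((2 - t : ℝ) : ℂ) * ζ) * (starRingEnd ℂ) (u j) := by rw [← hkey2]
        _ = ((2 - t : ℝ) : ℂ) * (ζ * (starRingEnd ℂ) (u j)) := by ring
    have e2 : 2 * (α * (μ j * (ζ * u j))).re = (2 - t) * (ζ * (starRingEnd ℂ) (u j)).re := by
      have h1 : ((2 : ℂ) * (starRingEnd ℂ) (α * (μ j * (ζ * u j)))).re
          = 2 * (α * (μ j * (ζ * u j))).re := by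
        simp only [Complex.mul_re, Complex.re_ofNat, Complex.im_ofNat, Complex.conj_re,
          Complex.conj_im]
        ring
      have h2 := congrArg Complex.re e1
      rw [h1, Complex.re_ofReal_mul] at h2
      exact h2
    linarith

lemma backward_dir (μ : Fin m → ℂ) (α : ℂ) (hα : ‖α‖ = 1) (j : Fin m)
    (hμ : μ j ≠ 0) (t : ℝ)
    (ht : t = 2 * (1 + ‖μ j‖) ∨ t = 2 * (1 - ‖μ j‖)) :
    ∃ v : Fin m → ℂ, v ≠ 0 ∧ ∀ u : Fin m → ℂ,
      2 * (∑ k, v k * (starRingEnd ℂ) (u k)).re - 2 * (α * ∑ k, μ k * (v k * u k)).re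
        = t * (∑ k, v k * (starRingEnd ℂ) (u k)).re := by
  set β : ℂ := (starRingEnd ℂ) (α * μ j) with hβ
  have hα0 : α ≠ 0 := by
    intro h; rw [h] at hα; simp at hα
  have hβ0 : β ≠ 0 := by
    rw [hβ]
    simp [hα0, hμ]
  set r : ℝ := ‖μ j‖ with hr
  have hrpos : 0 < r := norm_pos_iff.2 hμ
  have habsβ : ‖β‖ = r := by
    rw [hβ, Complex.norm_conj, norm_mul, hα, one_mul]
  have hr0 : (r : ℂ) ≠ 0 := by exact_mod_cast hrpos.ne'
  have hbr : β / (r : ℂ) ≠ 0 := div_ne_zero hβ0 hr0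
  have habsbr : ‖β / (r : ℂ)‖ = 1 := by
    rw [norm_div, habsβ, Complex.norm_real, Real.norm_eq_abs, abs_of_pos hrpos, div_self hrpos.ne']
  set ζ₀ : ℂ := Complex.exp (Complex.log (β / (r : ℂ)) / 2) with hζ₀
  have hζne : ζ₀ ≠ 0 := Complex.exp_ne_zero _
  have hζsq : ζ₀ ^ 2 = β / (r : ℂ) := by
    rw [hζ₀, sq, ← Complex.exp_add, add_halves, Complex.exp_log hbr]
  have habsζ : ‖ζ₀‖ = 1 := by
    rw [hζ₀, Complex.norm_exp]
    have h0 : (Complex.log (β / (r : ℂ)) / 2).re = 0 := by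
      rw [show Complex.log (β / (r : ℂ)) / 2
          = ((1 / 2 : ℝ) : ℂ) * Complex.log (β / (r : ℂ)) by push_cast; ring]
      rw [Complex.re_ofReal_mul, Complex.log_re, habsbr, Real.log_one, mul_zero]
    rw [h0, Real.exp_zero]
  have hconj : (starRingEnd ℂ) ζ₀ = ζ₀⁻¹ := by
    have h1 : ζ₀ * (starRingEnd ℂ) ζ₀ = 1 := by
      rw [Complex.mul_conj]
      rw [Complex.normSq_eq_norm_sq, habsζ]
      norm_num
    field_simp
    linear_combination h1
  have hkey : ((r : ℝ) : ℂ) * ζ₀ = β * (starRingEnd ℂ) ζ₀ := by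
    have hβe : β = (r : ℂ) * ζ₀ ^ 2 := by
      rw [hζsq]
      exact (mul_div_cancel₀ β hr0).symm
    rw [hconj, hβe]
    field_simp
  -- choose ζ according to the sign
  obtain hcase | hcase := ht
  · -- t = 2 (1 + r) : use ζ = I * ζ₀
    apply eigen_check μ α j t (Complex.I * ζ₀) (by simp [Complex.I_ne_zero, hζne])
    rw [← hβ]
    have hconjζ : (starRingEnd ℂ) (Complex.I * ζ₀) = -Complex.I * (starRingEnd ℂ) ζ₀ := by
      rw [map_mul, Complex.conj_I]
    rw [hconjζ]
    have h2t : ((2 - t : ℝ) : ℂ) = -2 * (r : ℂ) := by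
      rw [hcase]; push_cast; ring
    rw [h2t]
    linear_combination (-2 * Complex.I) * hkey
  · -- t = 2 (1 - r) : use ζ = ζ₀
    apply eigen_check μ α j t ζ₀ hζne
    rw [← hβ]
    have h2t : ((2 - t : ℝ) : ℂ) = 2 * (r : ℂ) := by
      rw [hcase]; push_cast; ring
    rw [h2t]
    linear_combination 2 * hkey


end
end Stmt18

/-- For `|λ₁| > |λ₂| > … > |λₙ|` (all nonzero), on the leaf
`L_c = {λ₁ z₁² + … + λₙ zₙ² = c}` through `p = (w₁,0,…,0)` (so `c = λ₁ w₁²`),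
parametrized near `p` by a holomorphic function `z₁ = g(z₂,…,zₙ)`, the real
Hessian at `p` of the restricted squared-distance function
`ψ(y) = |g(y)|² + Σ |yⱼ|²` has eigenvalues `2(1 ± |λᵢ/λ₁|)`, `i = 2,…,n`;
consequently `p` is a nondegenerate critical point of Morse index 0, i.e. a
local minimum. Here `n = m + 1` and `λ` is indexed by `Fin (m+1)`. -/
theorem stmt18 {m : ℕ} (hm : 1 ≤ m) (lam : Fin (m + 1) → ℂ)
    (hlam : ∀ j, lam j ≠ 0)
    (hmono : ∀ i j : Fin (m + 1), i < j → ‖lam j‖ < ‖lam i‖)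
    (w₁ : ℂ) (hw₁ : w₁ ≠ 0) (c : ℂ) (hc : c = lam 0 * w₁ ^ 2)
    (g : (Fin m → ℂ) → ℂ) (U : Set (Fin m → ℂ)) (hU : U ∈ nhds (0 : Fin m → ℂ))
    (hg : DifferentiableOn ℂ g U) (hg0 : g 0 = w₁)
    (hleaf : ∀ y ∈ U, lam 0 * g y ^ 2 + ∑ j : Fin m, lam j.succ * y j ^ 2 = c)
    (ψ : (Fin m → ℂ) → ℝ)
    (hψ : ψ = fun y => Complex.normSq (g y) + ∑ j, Complex.normSq (y j)) :
    fderiv ℝ ψ 0 = 0 ∧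
    {μ : ℝ | ∃ v : Fin m → ℂ, v ≠ 0 ∧ ∀ u : Fin m → ℂ,
        iteratedFDeriv ℝ 2 ψ 0 ![v, u] = μ * (∑ j, v j * starRingEnd ℂ (u j)).re}
      = {μ : ℝ | ∃ j : Fin m, μ = 2 * (1 + ‖lam j.succ / lam 0‖) ∨
          μ = 2 * (1 - ‖lam j.succ / lam 0‖)} ∧
    IsLocalMin ψ 0 := by
  classical
  set μ : Fin m → ℂ := fun j => lam j.succ / lam 0 with hμdef
  have h0 := hlam 0
  have hgy : ∀ y ∈ U, g y ^ 2 = Stmt18.hfun μ w₁ y := by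
    intro y hy
    apply mul_left_cancel₀ h0
    have hexp : lam 0 * Stmt18.hfun μ w₁ y = lam 0 * w₁ ^ 2 - ∑ j, lam j.succ * y j ^ 2 := by
      rw [Stmt18.hfun, mul_sub, Finset.mul_sum]
      congr 1
      apply Finset.sum_congr rfl
      intro j _
      rw [hμdef]
      simp only
      rw [sq]
      field_simp
    rw [hexp]
    have hl := hleaf y hy
    rw [hc] at hl
    linear_combination hl
  have hpsiphi : ∀ y ∈ U, ψ y = Stmt18.phi μ w₁ y := by
    intro y hy
    have h1 : Real.sqrt (Stmt18.Afun μ w₁ y) = Complex.normSq (g y) := by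
      rw [Stmt18.Afun, ← hgy y hy, ← Complex.norm_def, norm_pow, Complex.sq_norm]
    rw [hψ, Stmt18.phi, h1]
    rfl
  have hev : ψ =ᶠ[nhds 0] Stmt18.phi μ w₁ := Filter.eventually_of_mem hU hpsiphi
  have hμlt : ∀ j : Fin m, ‖μ j‖ < 1 := by
    intro j
    rw [hμdef]
    simp only
    rw [norm_div, div_lt_one (norm_pos_iff.2 h0)]
    exact hmono 0 j.succ (Fin.succ_pos j)
  have hμne : ∀ j : Fin m, μ j ≠ 0 := fun j => div_ne_zero (hlam j.succ) h0
  have hmin : IsLocalMin ψ 0 := by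
    have hpsi0 : ψ 0 = Complex.normSq w₁ := by
      rw [hψ]
      simp [hg0]
    apply Filter.eventually_of_mem hU
    intro y hy
    rw [hpsi0, hpsiphi y hy, Stmt18.phi]
    have hsqrt : Real.sqrt (Stmt18.Afun μ w₁ y) = ‖Stmt18.hfun μ w₁ y‖ := by
      rw [Stmt18.Afun, ← Complex.norm_def]
    rw [hsqrt]
    set q : ℂ := ∑ j, μ j * (y j * y j) with hq
    have habsq : ‖q‖ ≤ Stmt18.Sfun y := by
      refine le_trans (norm_sum_le _ _) ?_
      rw [Stmt18.Sfun]
      apply Finset.sum_le_sum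
      intro j _
      rw [norm_mul, norm_mul, ← sq, Complex.sq_norm]
      nlinarith [Complex.normSq_nonneg (y j), (hμlt j).le, norm_nonneg (μ j)]
    have h1 : ‖w₁ ^ 2‖ ≤ ‖Stmt18.hfun μ w₁ y‖ + ‖q‖ := by
      have hw2 : w₁ ^ 2 = Stmt18.hfun μ w₁ y + q := by
        rw [Stmt18.hfun]
        ring
      rw [hw2]
      exact norm_add_le _ _
    have h2 : ‖w₁ ^ 2‖ = Complex.normSq w₁ := by
      rw [norm_pow, Complex.sq_norm]
    linarith
  refine ⟨hmin.fderiv_eq_zero, ?_, hmin⟩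
  have hcont : Continuous (Stmt18.Afun μ w₁) := by
    apply Complex.continuous_normSq.comp
    exact continuous_const.sub (continuous_finset_sum Finset.univ
      (fun j _ => continuous_const.mul ((continuous_apply j).mul (continuous_apply j))))
  have hAne : ∀ᶠ y in nhds 0, Stmt18.Afun μ w₁ y ≠ 0 :=
    hcont.continuousAt.eventually_ne (Stmt18.Afun_zero_ne μ w₁ hw₁)
  have hder_eq : fderiv ℝ ψ =ᶠ[nhds 0] fun y => Stmt18.phider μ w₁ y := by
    have h1 : fderiv ℝ ψ =ᶠ[nhds 0] fderiv ℝ (Stmt18.phi μ w₁) := hev.fderiv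
    have h2 : fderiv ℝ (Stmt18.phi μ w₁) =ᶠ[nhds 0] fun y => Stmt18.phider μ w₁ y := by
      filter_upwards [hAne] with y hy
      exact (Stmt18.hasFDerivAt_phi μ w₁ hy).fderiv
    exact h1.trans h2
  have hsec : fderiv ℝ (fderiv ℝ ψ) 0 = Stmt18.T μ w₁ := by
    rw [hder_eq.fderiv_eq]
    exact (Stmt18.hasFDerivAt_phider μ w₁ hw₁).fderiv
  set α : ℂ := starRingEnd ℂ (w₁ ^ 2) / (‖w₁ ^ 2‖ : ℂ) with hαdef
  have hw2ne : (w₁ ^ 2 : ℂ) ≠ 0 := pow_ne_zero 2 hw₁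
  have hα : ‖α‖ = 1 := by
    rw [hαdef, norm_div, Complex.norm_conj, Complex.norm_real, Real.norm_eq_abs,
      abs_of_pos (norm_pos_iff.2 hw2ne), div_self (norm_ne_zero_iff.2 hw2ne)]
  have Hval : ∀ v u : Fin m → ℂ, iteratedFDeriv ℝ 2 ψ 0 ![v, u]
      = 2 * (∑ j, v j * starRingEnd ℂ (u j)).re - 2 * (α * ∑ j, μ j * (v j * u j)).re := by
    intro v u
    rw [iteratedFDeriv_two_apply, hsec]
    have h := Stmt18.T_apply μ w₁ hw₁ v u
    rw [show (![v, u] : Fin 2 → Fin m → ℂ) 0 = v from rfl,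
      show (![v, u] : Fin 2 → Fin m → ℂ) 1 = u from rfl, hαdef]
    exact h
  ext t
  simp only [Set.mem_setOf_eq]
  constructor
  · rintro ⟨v, hv, hvt⟩
    exact Stmt18.forward_dir μ α hα t v hv (fun u => by rw [← Hval v u]; exact hvt u)
  · rintro ⟨j, hj⟩
    obtain ⟨v, hv, hvt⟩ := Stmt18.backward_dir μ α hα j (hμne j) t hj
    exact ⟨v, hv, fun u => by rw [Hval v u]; exact hvt u⟩
end
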